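/- Let A be a symmetric positive definite p×p real matrix with smallest eigenvalue λ_min(A), and let Λ, S, P be symmetric matrices with ‖P‖₂ ≤ L₄² (P acting on vectorized matrices, representing M ↦ E[H Λ H]). Suppose Λ solves ΛA + AΛ − η·𝒫(Λ) = ηS where 𝒫 is a linear operator on symmetric matrices with ‖vec(𝒫(Λ))‖ ≤ L₄²‖Λ‖_F, and η L₄² < 2λ_min(A). Then ‖Λ‖_F ≤ η‖S‖_F / (2λ_min(A) − ηL₄²). -/

import Mathlib

open scoped InnerProductSpace Matrix

/-- Frobenius norm of a matrix. -/
noncomputable def frobNorm {m n : Type*} [Fintype m] [Fintype n]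
    (M : Matrix m n ℝ) : ℝ :=
  Real.sqrt (∑ i, ∑ j, (M i j) ^ 2)

noncomputable def vmap {p : ℕ} (M : Matrix (Fin p) (Fin p) ℝ) :
    EuclideanSpace ℝ (Fin p × Fin p) := WithLp.toLp 2 fun ij : Fin p × Fin p => M ij.1 ij.2

lemma frobNorm_eq {p : ℕ} (M : Matrix (Fin p) (Fin p) ℝ) : frobNorm M = ‖vmap M‖ := by
  rw [EuclideanSpace.norm_eq, frobNorm]
  congr 1
  rw [Fintype.sum_prod_type]
  simp [vmap, Real.norm_eq_abs, sq_abs]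

lemma vmap_add {p : ℕ} (X Y : Matrix (Fin p) (Fin p) ℝ) :
    vmap (X + Y) = vmap X + vmap Y := rfl

lemma vmap_smul {p : ℕ} (c : ℝ) (X : Matrix (Fin p) (Fin p) ℝ) :
    vmap (c • X) = c • vmap X := rfl

lemma inner_vmap {p : ℕ} (X Y : Matrix (Fin p) (Fin p) ℝ) :
    ⟪vmap X, vmap Y⟫_ℝ = ∑ i, ∑ j, X i j * Y i j := by
  rw [PiLp.inner_apply, Fintype.sum_prod_type]
  simp [vmap, mul_comm]

lemma sum_mul_eq_trace {p : ℕ} (X Y : Matrix (Fin p) (Fin p) ℝ) :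
    ∑ i, ∑ j, X i j * Y i j = Matrix.trace (X * Yᵀ) := by
  simp [Matrix.trace, Matrix.diag, Matrix.mul_apply, Matrix.transpose_apply]

theorem stmt16 {p : ℕ} (A Λ S : Matrix (Fin p) (Fin p) ℝ)
    (hA : A.PosDef) (hΛ : Λ.IsSymm) (hS : S.IsSymm)
    (P : Matrix (Fin p) (Fin p) ℝ →ₗ[ℝ] Matrix (Fin p) (Fin p) ℝ)
    (L₄ η lammin : ℝ)
    (hmin : IsLeast (Set.range hA.1.eigenvalues) lammin)
    (hP : ∀ M : Matrix (Fin p) (Fin p) ℝ, M.IsSymm → frobNorm (P M) ≤ L₄ ^ 2 * frobNorm M)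
    (hη : 0 < η) (hsmall : η * L₄ ^ 2 < 2 * lammin)
    (heq : Λ * A + A * Λ - η • P Λ = η • S) :
    frobNorm Λ ≤ η * frobNorm S / (2 * lammin - η * L₄ ^ 2) := by
  -- setup
  set t := frobNorm Λ with ht
  set s := frobNorm S with hs
  have ht0 : 0 ≤ t := Real.sqrt_nonneg _
  have hs0 : 0 ≤ s := Real.sqrt_nonneg _
  have hd : 0 < 2 * lammin - η * L₄ ^ 2 := by linarith
  -- B := A - lammin • 1 is PSD
  have hB : (A - lammin • (1 : Matrix (Fin p) (Fin p) ℝ)).PosSemidef := by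
    have hspec := hA.1.spectral_theorem
    set U : Matrix (Fin p) (Fin p) ℝ := (hA.1.eigenvectorUnitary : Matrix (Fin p) (Fin p) ℝ)
    have hU : U * star U = 1 := Matrix.mem_unitaryGroup_iff.mp hA.1.eigenvectorUnitary.2
    have key : A - lammin • 1 =
        U * Matrix.diagonal (fun i => hA.1.eigenvalues i - lammin) * star U := by
      have h1 : lammin • (1 : Matrix (Fin p) (Fin p) ℝ) =
          U * (lammin • 1) * star U := by
        rw [Matrix.mul_smul, Matrix.smul_mul, mul_one, hU]
      rw [h1]
      calc A - U * (lammin • 1) * star U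
          = U * Matrix.diagonal (RCLike.ofReal ∘ hA.1.eigenvalues) * star U
            - U * (lammin • 1) * star U := by
              rw [Unitary.conjStarAlgAut_apply] at hspec
              exact congrArg (· - U * (lammin • 1) * star U) hspec
        _ = U * (Matrix.diagonal (RCLike.ofReal ∘ hA.1.eigenvalues) - lammin • 1) * star U := by
            noncomm_ring
        _ = U * Matrix.diagonal (fun i => hA.1.eigenvalues i - lammin) * star U := by
            congr 2
            ext i j
            rcases eq_or_ne i j with rfl | h
            · simp [Matrix.one_apply]
            · simp [Matrix.diagonal_apply_ne _ h, Matrix.one_apply_ne h]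
    rw [key]
    apply Matrix.PosSemidef.mul_mul_conjTranspose_same
    · refine Matrix.posSemidef_diagonal_iff.mpr fun i => ?_
      have := hmin.2 ⟨i, rfl⟩
      linarith
  -- quadratic form trace bound: trace (Λ * B * Λ) ≥ 0
  have htr : 0 ≤ Matrix.trace (Λᵀ * ((A - lammin • 1) * Λ)) := by
    rw [Matrix.trace]
    apply Finset.sum_nonneg
    intro i _
    have h := hB.dotProduct_mulVec_nonneg (fun j => Λ j i)
    convert h using 1
    rfl
  -- trace identities
  have htΛΛ : Matrix.trace (Λ * Λᵀ) = t ^ 2 := by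
    rw [← sum_mul_eq_trace, ht, frobNorm, Real.sq_sqrt]
    · simp [pow_two]
    · positivity
  have hmain : 2 * lammin * t ^ 2 ≤ ⟪vmap (Λ * A + A * Λ), vmap Λ⟫_ℝ := by
    rw [inner_vmap, sum_mul_eq_trace]
    have e1 : (Λ * A + A * Λ) * Λᵀ = Λᵀ * ((A - lammin • 1) * Λ)
        + lammin • (Λ * Λᵀ) + A * Λ * Λᵀ := by
      rw [Matrix.IsSymm] at hΛ
      rw [hΛ]
      noncomm_ring
    rw [e1]
    rw [Matrix.trace_add, Matrix.trace_add, Matrix.trace_smul, htΛΛ]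
    have e2 : Matrix.trace (A * Λ * Λᵀ) = Matrix.trace (Λᵀ * ((A - lammin • 1) * Λ))
        + lammin * t ^ 2 := by
      rw [Matrix.IsSymm] at hΛ
      have : Λᵀ * ((A - lammin • 1) * Λ) = Λ * A * Λ - lammin • (Λ * Λᵀ) := by
        rw [hΛ]; noncomm_ring
      rw [this, Matrix.trace_sub, Matrix.trace_smul, htΛΛ]
      have : Matrix.trace (A * Λ * Λᵀ) = Matrix.trace (Λ * A * Λ) := by
        rw [hΛ, Matrix.trace_mul_cycle]
      rw [this]
      simp only [smul_eq_mul]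
      ring
    rw [e2]
    have := htr
    simp only [smul_eq_mul]
    linarith
  -- Cauchy-Schwarz
  have hCS : ⟪vmap (Λ * A + A * Λ), vmap Λ⟫_ℝ ≤ frobNorm (Λ * A + A * Λ) * t := by
    rw [frobNorm_eq, ht, frobNorm_eq]
    exact real_inner_le_norm _ _
  -- bound frobNorm (Λ*A+A*Λ)
  have heq2 : Λ * A + A * Λ = η • P Λ + η • S := by
    rw [← heq]; abel
  have hbound : frobNorm (Λ * A + A * Λ) ≤ η * (L₄ ^ 2 * t) + η * s := by
    rw [heq2, frobNorm_eq, vmap_add, vmap_smul, vmap_smul]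
    calc ‖η • vmap (P Λ) + η • vmap S‖ ≤ ‖η • vmap (P Λ)‖ + ‖η • vmap S‖ := norm_add_le _ _
      _ = η * ‖vmap (P Λ)‖ + η * ‖vmap S‖ := by
          rw [norm_smul, norm_smul, Real.norm_eq_abs, abs_of_pos hη]
      _ ≤ η * (L₄ ^ 2 * t) + η * s := by
          have h1 : ‖vmap (P Λ)‖ ≤ L₄ ^ 2 * t := by
            rw [← frobNorm_eq]; exact hP Λ hΛ
          have h2 : ‖vmap S‖ = s := (frobNorm_eq S).symm
          rw [h2]
          have := mul_le_mul_of_nonneg_left h1 hη.le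
          linarith
  -- combine
  have hfinal : 2 * lammin * t ^ 2 ≤ (η * (L₄ ^ 2 * t) + η * s) * t :=
    le_trans hmain (le_trans hCS (mul_le_mul_of_nonneg_right hbound ht0))
  rw [le_div_iff₀ hd]
  rcases eq_or_lt_of_le ht0 with h | h
  · rw [← h]; simp; positivity
  · nlinarith [hfinal, h]
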